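/- For all p, q, p', q' ∈ ZMod d, the trace of U_{p,q}ᴴ · U_{p',q'} equals d if (p,q) = (p',q') and equals 0 otherwise. -/

import Mathlib

open Matrix BigOperators

/-- ω = exp(2πi/d). -/
noncomputable def omega (d : ℕ) : ℂ := Complex.exp (2 * Real.pi * Complex.I / d)

/-- The Weyl–Heisenberg matrix `U_{p,q}`. -/
noncomputable def WH (d : ℕ) [NeZero d] (p q : ZMod d) : Matrix (ZMod d) (ZMod d) ℂ :=
  fun j k => if j = k + p then omega d ^ (q.val * k.val) else 0

lemma sum_zmod_val (d : ℕ) [NeZero d] (f : ℕ → ℂ) :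
    ∑ k : ZMod d, f (ZMod.val k) = ∑ i ∈ Finset.range d, f i := by
  refine Finset.sum_nbij' (fun k => ZMod.val k) (fun i => (i : ZMod d)) ?_ ?_ ?_ ?_ ?_
  · intro a _; exact Finset.mem_range.2 (ZMod.val_lt a)
  · intro a _; exact Finset.mem_univ _
  · intro a _; simp [ZMod.natCast_val, ZMod.cast_id]
  · intro a ha; exact ZMod.val_cast_of_lt (Finset.mem_range.1 ha)
  · intro a _; rfl

theorem weyl_heisenberg_trace_orthogonality (d : ℕ) [NeZero d] (p q p' q' : ZMod d) :
    Matrix.trace ((WH d p q)ᴴ * WH d p' q') =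
      if (p, q) = (p', q') then (d : ℂ) else 0 := by
  have hd : d ≠ 0 := NeZero.ne d
  have hζ : IsPrimitiveRoot (omega d) d := Complex.isPrimitiveRoot_exp d hd
  have habs : ‖omega d‖ = 1 := by
    rw [omega, Complex.norm_exp]
    norm_num [Complex.div_re, Complex.mul_re, Complex.mul_im]
  have hstar : star (omega d) * omega d = 1 := by
    rw [Complex.star_def, ← Complex.normSq_eq_conj_mul_self]
    simp [Complex.normSq_eq_norm_sq, habs]
  have hinv : star (omega d) = (omega d)⁻¹ := eq_inv_of_mul_eq_one_left hstar
  have hω0 : omega d ≠ 0 := by unfold omega; exact Complex.exp_ne_zero _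
  have key : Matrix.trace ((WH d p q)ᴴ * WH d p' q') =
      ∑ k : ZMod d, if k + p' = k + p then
        star (omega d ^ (q.val * k.val)) * omega d ^ (q'.val * k.val) else 0 := by
    simp only [Matrix.trace, Matrix.diag, Matrix.mul_apply, Matrix.conjTranspose_apply, WH,
      apply_ite star, star_zero, ite_mul, zero_mul, mul_ite, mul_zero]
    congr 1; ext k
    rw [Finset.sum_ite_eq' Finset.univ (k + p')
      (fun x => if x = k + p then star (omega d ^ (q.val * k.val)) * omega d ^ (q'.val * k.val) else 0)]
    simp
  rw [key]
  by_cases hp : p = p'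
  · subst hp
    simp only [add_right_cancel_iff, if_true]
    have hrw : ∀ k : ZMod d,
        star (omega d ^ (q.val * k.val)) * omega d ^ (q'.val * k.val)
          = ((star (omega d)) ^ q.val * omega d ^ q'.val) ^ k.val := by
      intro k
      rw [mul_pow, ← pow_mul, ← pow_mul, star_pow]
    simp only [hrw]
    rw [sum_zmod_val d (fun i => ((star (omega d)) ^ q.val * omega d ^ q'.val) ^ i)]
    by_cases hq : q = q'
    · subst hq
      have h1 : (star (omega d)) ^ q.val * omega d ^ q.val = 1 := by
        rw [← mul_pow, hstar, one_pow]
      have h1' : ((starRingEnd ℂ) (omega d)) ^ q.val * omega d ^ q.val = 1 := h1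
      rw [if_pos rfl]
      simp [h1']
    · have hx : (star (omega d)) ^ q.val * omega d ^ q'.val
          = omega d ^ ((q'.val : ℤ) - (q.val : ℤ)) := by
        rw [hinv, inv_pow, ← zpow_natCast (omega d) q'.val, ← zpow_natCast (omega d) q.val,
          zpow_sub₀ hω0, div_eq_mul_inv, mul_comm]
      have hx1 : (star (omega d)) ^ q.val * omega d ^ q'.val ≠ 1 := by
        rw [hx]
        intro h
        rw [hζ.zpow_eq_one_iff_dvd] at h
        have h1 := ZMod.val_lt q'
        have h2 := ZMod.val_lt q
        have h3 : q'.val ≠ q.val := fun he => hq (ZMod.val_injective d he.symm)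
        have h4 : ((q'.val : ℤ) - (q.val : ℤ)) = 0 :=
          Int.eq_zero_of_abs_lt_dvd h (by rw [abs_lt]; constructor <;> omega)
        omega
      have hxd : ((star (omega d)) ^ q.val * omega d ^ q'.val) ^ d = 1 := by
        rw [hx, ← zpow_natCast, ← _root_.zpow_mul, mul_comm, _root_.zpow_mul, zpow_natCast,
          hζ.pow_eq_one, _root_.one_zpow]
      rw [geom_sum_eq hx1, hxd, sub_self, zero_div, if_neg (by simp [hq])]
  · rw [if_neg (by simp [hp])]
    have : ∀ k : ZMod d, k + p' ≠ k + p := fun k h => hp (by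
      have := add_left_cancel h; exact this.symm)
    simp [this]
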